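/- Let w₀ be the radial ground state of Δw - w + w^p = 0 in ℝ^N with 1 < p. For a fixed unit vector direction j, the function g(ξ) = ∂_j w₀(ξ) + σ^{-1} ξ^j w₀(ξ) with σ = (p+1)/(p-1) - N/2 ≠ 0 satisfies the orthogonality conditions ∫_{ℝ^N} g ∂_i w₀ dξ = 0 for all i = 1,…,N. -/

import Mathlib

open MeasureTheory Real
open SchwartzMap

/-- Partial derivative in the `j`-th coordinate direction. -/
noncomputable def pd {N : ℕ} (w : (Fin N → ℝ) → ℝ) (j : Fin N) (x : Fin N → ℝ) : ℝ :=
  fderiv ℝ w x (Pi.single j 1)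

/-- Laplacian on `ℝ^N`. -/
noncomputable def lap {N : ℕ} (w : (Fin N → ℝ) → ℝ) (x : Fin N → ℝ) : ℝ :=
  ∑ j, pd (pd w j) j x

variable {N : ℕ}

/-- Partial derivative as a map of Schwartz space. -/
noncomputable def Dk (k : Fin N) (f : 𝓢((Fin N → ℝ), ℝ)) : 𝓢((Fin N → ℝ), ℝ) :=
  LineDeriv.lineDerivOp (Pi.single k 1 : Fin N → ℝ) f

lemma Dk_apply (k : Fin N) (f : 𝓢((Fin N → ℝ), ℝ)) : ⇑(Dk k f) = pd (⇑f) k := by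
  funext x; exact SchwartzMap.lineDerivOp_apply_eq_fderiv _ f x

/-- Multiplication by the `k`-th coordinate as a map of Schwartz space. -/
noncomputable def Mk (k : Fin N) (f : 𝓢((Fin N → ℝ), ℝ)) : 𝓢((Fin N → ℝ), ℝ) :=
  SchwartzMap.bilinLeftCLM (ContinuousLinearMap.mul ℝ ℝ)
    ((ContinuousLinearMap.proj k : ((Fin N → ℝ)) →L[ℝ] ℝ).hasTemperateGrowth) f

lemma Mk_apply (k : Fin N) (f : 𝓢((Fin N → ℝ), ℝ)) (x : Fin N → ℝ) :
    Mk k f x = f x * x k := rfl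

lemma schwartz_bound (f : 𝓢((Fin N → ℝ), ℝ)) : ∃ C, ∀ x, ‖f x‖ ≤ C := by
  obtain ⟨C, hC⟩ := f.decay 0 0
  exact ⟨C, fun x => by simpa using hC.2 x⟩

lemma int_mul (f g : 𝓢((Fin N → ℝ), ℝ)) : Integrable (fun x => f x * g x) := by
  obtain ⟨C, hC⟩ := schwartz_bound f
  exact (g.integrable (μ := volume)).bdd_mul f.continuous.aestronglyMeasurable (ae_of_all _ hC)

lemma ibp (f g : 𝓢((Fin N → ℝ), ℝ)) (k : Fin N) :
    ∫ x, f x * pd (⇑g) k x = - ∫ x, pd (⇑f) k x * g x := by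
  have h1 : Integrable (fun x => fderiv ℝ (⇑f) x (Pi.single k 1) * g x) := by
    have := int_mul (Dk k f) g
    simpa [Dk_apply, pd] using this
  have h2 : Integrable (fun x => f x * fderiv ℝ (⇑g) x (Pi.single k 1)) := by
    have := int_mul f (Dk k g)
    simpa [Dk_apply, pd] using this
  have key := integral_mul_fderiv_eq_neg_fderiv_mul_of_integrable (μ := volume)
    (v := Pi.single k 1) h1 h2 (int_mul f g) (fun x _ => f.differentiableAt) (fun x _ => g.differentiableAt)
  simpa [pd] using key

lemma intA {F : (Fin N → ℝ) → ℝ} {F' : (Fin N → ℝ) → ((Fin N → ℝ) →L[ℝ] ℝ)} (k : Fin N)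
    (hF : ∀ x, HasFDerivAt F (F' x) x)
    (h1 : Integrable F) (h2 : Integrable (fun x => x k * F x))
    (h3 : Integrable (fun x => x k * F' x (Pi.single k 1))) :
    ∫ x, x k * F' x (Pi.single k 1) = - ∫ x, F x := by
  have hproj : ∀ x : Fin N → ℝ, HasFDerivAt (fun y : Fin N → ℝ => y k)
      (ContinuousLinearMap.proj k : ((Fin N → ℝ)) →L[ℝ] ℝ) x :=
    fun x => (ContinuousLinearMap.proj k : ((Fin N → ℝ)) →L[ℝ] ℝ).hasFDerivAt
  have key := integral_bilinear_hasFDerivAt_right_eq_neg_left_of_integrable (μ := volume)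
    (f := fun x : Fin N → ℝ => x k) (f' := fun _ => (ContinuousLinearMap.proj k))
    (g := F) (g' := F') (v := Pi.single k 1) (B := ContinuousLinearMap.mul ℝ ℝ)
    ?_ ?_ ?_ (fun x _ => hproj x) (fun x _ => hF x)
  · simpa using key
  · simpa using h1
  · exact h3
  · exact h2

section Sym
variable {R : ((Fin N → ℝ)) →L[ℝ] ((Fin N → ℝ))}

lemma R_norm (hRR : ∀ x, R (R x) = x) (hle : ∀ (x : Fin N → ℝ) m, ‖R x m‖ ≤ ‖x‖)
    (x : Fin N → ℝ) : ‖R x‖ = ‖x‖ := by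
  have h1 : ∀ y : Fin N → ℝ, ‖R y‖ ≤ ‖y‖ := fun y =>
    (pi_norm_le_iff_of_nonneg (norm_nonneg y)).2 (hle y)
  refine le_antisymm (h1 x) ?_
  calc ‖x‖ = ‖R (R x)‖ := by rw [hRR]
    _ ≤ ‖R x‖ := h1 _

lemma integral_comp_R (hRR : ∀ x, R (R x) = x)
    (hmp : MeasurePreserving (⇑R) volume volume) (f : (Fin N → ℝ) → ℝ) :
    ∫ x, f (R x) = ∫ x, f x := by
  let e : (Fin N → ℝ) ≃ᵐ (Fin N → ℝ) :=
    { toFun := ⇑R, invFun := ⇑R, left_inv := hRR, right_inv := hRR,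
      measurable_toFun := R.continuous.measurable,
      measurable_invFun := R.continuous.measurable }
  exact hmp.integral_comp (e.measurableEmbedding) f

lemma integral_odd_zero (hRR : ∀ x, R (R x) = x)
    (hmp : MeasurePreserving (⇑R) volume volume) (f : (Fin N → ℝ) → ℝ)
    (hodd : ∀ x, f (R x) = -f x) : ∫ x, f x = 0 := by
  have h := integral_comp_R hRR hmp f
  have h2 : ∫ x, f (R x) = - ∫ x, f x := by
    simp only [hodd]
    exact integral_neg f
  linarith [h, h2]

lemma fderiv_R (w : 𝓢((Fin N → ℝ), ℝ)) (hw : ∀ x, w (R x) = w x) (x v : Fin N → ℝ) :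
    fderiv ℝ (⇑w) (R x) (R v) = fderiv ℝ (⇑w) x v := by
  have h1 : HasFDerivAt (⇑w ∘ ⇑R) ((fderiv ℝ (⇑w) (R x)).comp R) x :=
    (w.differentiableAt (x := R x)).hasFDerivAt.comp x R.hasFDerivAt
  have h2 : (⇑w ∘ ⇑R) = ⇑w := funext hw
  rw [h2] at h1
  have h3 := h1.fderiv
  calc fderiv ℝ (⇑w) (R x) (R v) = ((fderiv ℝ (⇑w) (R x)).comp R) v := rfl
    _ = fderiv ℝ (⇑w) x v := by rw [← h3]

end Sym

noncomputable def reflL (i : Fin N) : ((Fin N → ℝ)) →L[ℝ] ((Fin N → ℝ)) :=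
  ContinuousLinearMap.pi (fun m => if m = i then -(ContinuousLinearMap.proj m)
    else ContinuousLinearMap.proj m)

lemma reflL_apply (i : Fin N) (x : Fin N → ℝ) (m : Fin N) :
    reflL i x m = if m = i then -(x m) else x m := by
  rw [reflL, ContinuousLinearMap.pi_apply]
  split_ifs <;> simp

lemma reflL_invol (i : Fin N) (x : Fin N → ℝ) : reflL i (reflL i x) = x := by
  funext m; simp [reflL_apply]; split_ifs <;> simp

lemma reflL_le (i : Fin N) (x : Fin N → ℝ) (m : Fin N) : ‖reflL i x m‖ ≤ ‖x‖ := by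
  rw [reflL_apply]
  split_ifs <;> simpa using norm_le_pi_norm x m

lemma reflL_mp (i : Fin N) : MeasurePreserving (⇑(reflL i)) volume volume := by
  have h := volume_preserving_pi
    (f := fun (m : Fin N) => if m = i then (fun t : ℝ => -t) else id) (fun m => by
      by_cases h : m = i
      · simpa [h] using Measure.measurePreserving_neg (volume : Measure ℝ)
      · simpa [h] using MeasurePreserving.id (volume : Measure ℝ))
  have he : (⇑(reflL i)) = fun (a : Fin N → ℝ) (m : Fin N) =>
      (if m = i then (fun t : ℝ => -t) else id) (a m) := by
    funext a m
    rw [reflL_apply]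
    split_ifs <;> simp
  rw [he]; exact h

lemma reflL_single (i k : Fin N) :
    reflL i (Pi.single k 1) = (if k = i then (-1 : ℝ) else 1) • (Pi.single k 1 : Fin N → ℝ) := by
  funext m
  rw [reflL_apply]
  by_cases hm : m = i <;> by_cases hk : k = i <;>
    simp [hm, hk, Pi.single_apply]

noncomputable def swapL (a b : Fin N) : ((Fin N → ℝ)) →L[ℝ] ((Fin N → ℝ)) :=
  ContinuousLinearMap.pi (fun m => ContinuousLinearMap.proj (Equiv.swap a b m))

lemma swapL_apply (a b : Fin N) (x : Fin N → ℝ) (m : Fin N) :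
    swapL a b x m = x (Equiv.swap a b m) := rfl

lemma swapL_invol (a b : Fin N) (x : Fin N → ℝ) : swapL a b (swapL a b x) = x := by
  funext m; simp [swapL_apply, Equiv.swap_apply_self]

lemma swapL_le (a b : Fin N) (x : Fin N → ℝ) (m : Fin N) : ‖swapL a b x m‖ ≤ ‖x‖ := by
  rw [swapL_apply]; exact norm_le_pi_norm x _

lemma swapL_mp (a b : Fin N) : MeasurePreserving (⇑(swapL a b)) volume volume := by
  have h := MeasureTheory.volume_preserving_arrowCongr' (Equiv.swap a b)
    (MeasurableEquiv.refl ℝ) (MeasurePreserving.id (volume : Measure ℝ))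
  have he : ⇑(MeasurableEquiv.arrowCongr' (Equiv.swap a b) (MeasurableEquiv.refl ℝ))
      = ⇑(swapL a b) := by
    funext x
    funext m
    simp [MeasurableEquiv.arrowCongr', Equiv.arrowCongr', Equiv.arrowCongr, swapL_apply]
  rwa [he] at h

lemma swapL_single (a b k : Fin N) :
    swapL a b (Pi.single k 1) = (Pi.single (Equiv.swap a b k) 1 : Fin N → ℝ) := by
  funext m
  rw [swapL_apply]
  simp only [Pi.single_apply]
  congr 1
  apply propext
  constructor <;> rintro rfl <;> simp [Equiv.swap_apply_self]

lemma pd_reflL (w : 𝓢((Fin N → ℝ), ℝ)) (i : Fin N) (hw : ∀ x, w (reflL i x) = w x)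
    (k : Fin N) (x : Fin N → ℝ) :
    pd (⇑w) k (reflL i x) = (if k = i then (-1 : ℝ) else 1) * pd (⇑w) k x := by
  have h := fderiv_R (R := reflL i) w hw x (Pi.single k 1)
  rw [reflL_single, _root_.map_smul] at h
  show fderiv ℝ (⇑w) (reflL i x) (Pi.single k 1)
    = (if k = i then (-1 : ℝ) else 1) * fderiv ℝ (⇑w) x (Pi.single k 1)
  split_ifs at h ⊢ with hc
  · simp only [smul_eq_mul, neg_one_mul] at h ⊢; linarith
  · simpa using h

lemma pd_swapL (w : 𝓢((Fin N → ℝ), ℝ)) (a b : Fin N) (hw : ∀ x, w (swapL a b x) = w x)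
    (k : Fin N) (x : Fin N → ℝ) :
    pd (⇑w) (Equiv.swap a b k) (swapL a b x) = pd (⇑w) k x := by
  have h := fderiv_R (R := swapL a b) w hw x (Pi.single k 1)
  rw [swapL_single] at h
  exact h

lemma pd_comm (w : 𝓢((Fin N → ℝ), ℝ)) (k l : Fin N) (x : Fin N → ℝ) :
    pd (pd (⇑w) k) l x = pd (pd (⇑w) l) k x := by
  set f' : (Fin N → ℝ) → ((Fin N → ℝ) →L[ℝ] ℝ) := fun y => fderiv ℝ (⇑w) y with hf'
  have hF : ∀ y, HasFDerivAt (⇑w) (f' y) y := fun y => (w.differentiableAt).hasFDerivAt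
  have hcoe : f' = ⇑(SchwartzMap.fderivCLM ℝ (Fin N → ℝ) ℝ w) := by
    funext y; rw [hf', SchwartzMap.fderivCLM_apply]
  have hx : HasFDerivAt f' (fderiv ℝ f' x) x := by
    rw [hcoe]; exact ((SchwartzMap.fderivCLM ℝ (Fin N → ℝ) ℝ w).differentiableAt).hasFDerivAt
  have hsymm := second_derivative_symmetric hF hx (Pi.single k 1) (Pi.single l 1)
  have hk : ∀ (v : Fin N → ℝ), HasFDerivAt (fun y => f' y v)
      ((ContinuousLinearMap.apply ℝ ℝ v).comp (fderiv ℝ f' x)) x := fun v =>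
    (ContinuousLinearMap.apply ℝ ℝ v).hasFDerivAt.comp x hx
  have e1 : pd (pd (⇑w) k) l x = fderiv ℝ f' x (Pi.single l 1) (Pi.single k 1) := by
    have := (hk (Pi.single k 1)).fderiv
    show fderiv ℝ (fun y => fderiv ℝ (⇑w) y (Pi.single k 1)) x (Pi.single l 1) = _
    rw [show (fun y => fderiv ℝ (⇑w) y (Pi.single k 1)) = (fun y => f' y (Pi.single k 1)) from rfl,
      this]
    rfl
  have e2 : pd (pd (⇑w) l) k x = fderiv ℝ f' x (Pi.single k 1) (Pi.single l 1) := by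
    have := (hk (Pi.single l 1)).fderiv
    show fderiv ℝ (fun y => fderiv ℝ (⇑w) y (Pi.single l 1)) x (Pi.single k 1) = _
    rw [show (fun y => fderiv ℝ (⇑w) y (Pi.single l 1)) = (fun y => f' y (Pi.single l 1)) from rfl,
      this]
    rfl
  rw [e1, e2]; exact hsymm.symm

lemma int_pd2_mul (f g : 𝓢((Fin N → ℝ), ℝ)) (k : Fin N) :
    Integrable (fun x => pd (pd (⇑f) k) k x * g x) := by
  have := int_mul (Dk k (Dk k f)) g
  simpa [Dk_apply] using this

lemma int_lap_mul (f g : 𝓢((Fin N → ℝ), ℝ)) : Integrable (fun x => lap (⇑f) x * g x) := by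
  have he : (fun x => lap (⇑f) x * g x) = fun x => ∑ k, pd (pd (⇑f) k) k x * g x := by
    funext x; rw [lap, Finset.sum_mul]
  rw [he]
  exact integrable_finset_sum _ (fun k _ => int_pd2_mul f g k)

lemma integral_lap_mul (f g : 𝓢((Fin N → ℝ), ℝ)) :
    ∫ x, lap (⇑f) x * g x = ∑ k, ∫ x, pd (pd (⇑f) k) k x * g x := by
  have he : (fun x => lap (⇑f) x * g x) = fun x => ∑ k, pd (pd (⇑f) k) k x * g x := by
    funext x; rw [lap, Finset.sum_mul]
  rw [he]
  exact integral_finset_sum _ (fun k _ => int_pd2_mul f g k)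

lemma F1gen (f : 𝓢((Fin N → ℝ), ℝ)) (k : Fin N) :
    ∫ x, x k * (f x * pd (⇑f) k x) = -(∫ x, f x * f x) / 2 := by
  have hF : ∀ x, HasFDerivAt (fun y => f y * f y)
      (f x • fderiv ℝ (⇑f) x + f x • fderiv ℝ (⇑f) x) x := fun x =>
    (f.differentiableAt.hasFDerivAt).mul f.differentiableAt.hasFDerivAt
  have h2 : Integrable (fun x => x k * (f x * f x)) :=
    (int_mul f (Mk k f)).congr (Filter.Eventually.of_forall fun x => by
      simp only [Mk_apply]; ring)
  have e : (fun x => x k * ((f x • fderiv ℝ (⇑f) x + f x • fderiv ℝ (⇑f) x) (Pi.single k 1)))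
      = fun x => 2 * (x k * (f x * pd (⇑f) k x)) := by
    funext x
    simp only [ContinuousLinearMap.add_apply, ContinuousLinearMap.coe_smul', Pi.smul_apply,
      smul_eq_mul, pd]
    ring
  have h3 : Integrable (fun x =>
      x k * ((f x • fderiv ℝ (⇑f) x + f x • fderiv ℝ (⇑f) x) (Pi.single k 1))) := by
    rw [e]
    exact ((int_mul f (Mk k (Dk k f))).congr (Filter.Eventually.of_forall fun x => by
      simp only [Mk_apply, Dk_apply, pd]; ring)).const_mul 2
  have key := intA k hF (int_mul f f) h2 h3
  rw [e, MeasureTheory.integral_const_mul] at key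
  linarith

lemma pd_def (w : (Fin N → ℝ) → ℝ) (k : Fin N) (x : Fin N → ℝ) :
    fderiv ℝ w x (Pi.single k 1) = pd w k x := rfl


/-- Solvability (orthogonality) condition: for the radial ground state `w₀` of
`Δw - w + w^p = 0` and `σ = (p+1)/(p-1) - N/2 ≠ 0`, the function
`g = ∂_j w₀ + σ⁻¹ ξ^j w₀` satisfies `∫ g ∂_i w₀ = 0` for all `i`. -/
theorem stmt_19 {N : ℕ} (hN : 0 < N) (p : ℝ) (hp : 1 < p)
    (w₀ : SchwartzMap (Fin N → ℝ) ℝ) (hpos : ∀ x, 0 < w₀ x)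
    (hrad : ∀ x y : Fin N → ℝ, ‖x‖ = ‖y‖ → w₀ x = w₀ y)
    (hsol : ∀ x, lap (⇑w₀) x - w₀ x + w₀ x ^ p = 0)
    (σ : ℝ) (hσdef : σ = (p + 1) / (p - 1) - (N : ℝ) / 2) (hσ : σ ≠ 0) (j : Fin N) :
    ∀ i : Fin N, ∫ x, (pd (⇑w₀) j x + σ⁻¹ * x j * w₀ x) * pd (⇑w₀) i x = 0 := by
  intro i
  classical
  have hwrefl : ∀ (m : Fin N) (x : Fin N → ℝ), w₀ (reflL m x) = w₀ x := fun m x =>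
    hrad _ _ (R_norm (reflL_invol m) (reflL_le m) x)
  by_cases hij : i = j
  · subst hij
    have hwswap : ∀ (a b : Fin N) (x : Fin N → ℝ), w₀ (swapL a b x) = w₀ x := fun a b x =>
      hrad _ _ (R_norm (swapL_invol a b) (swapL_le a b) x)
    -- symmetry of the Dirichlet integrals
    have hIsym : ∀ k, ∫ x, pd (⇑w₀) k x * pd (⇑w₀) k x
        = ∫ x, pd (⇑w₀) i x * pd (⇑w₀) i x := by
      intro k
      have hcomp := integral_comp_R (swapL_invol i k) (swapL_mp i k)
        (fun x => pd (⇑w₀) k x * pd (⇑w₀) k x)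
      have hpt : ∀ x, pd (⇑w₀) k (swapL i k x) = pd (⇑w₀) i x := by
        intro x
        have h := pd_swapL w₀ i k (hwswap i k) i x
        rwa [Equiv.swap_apply_left] at h
      rw [← hcomp]
      simp only [hpt]
    -- ∫ ∂_kk w * w = - ∫ (∂_k w)^2
    have hF3 : ∀ k, ∫ x, pd (pd (⇑w₀) k) k x * w₀ x
        = -∫ x, pd (⇑w₀) k x * pd (⇑w₀) k x := by
      intro k
      have h := ibp (Dk k w₀) w₀ k
      simp only [Dk_apply] at h
      linarith
    -- ∫ (lap w) w = -N * ∫ (∂_j w)^2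
    have hlapw : ∫ x, lap (⇑w₀) x * w₀ x
        = -(N : ℝ) * ∫ x, pd (⇑w₀) i x * pd (⇑w₀) i x := by
      rw [integral_lap_mul w₀ w₀]
      have : ∀ k : Fin N, (∫ x, pd (pd (⇑w₀) k) k x * w₀ x)
          = -∫ x, pd (⇑w₀) i x * pd (⇑w₀) i x := fun k => by rw [hF3 k, hIsym k]
      rw [Finset.sum_congr rfl (fun k _ => this k)]
      simp [Finset.sum_const, mul_comm]
    have hp1 : (0:ℝ) < p + 1 := by linarith
    have hpm : p - 1 ≠ 0 := by intro h; nlinarith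
    -- P = J + N * I
    have hE1 : ∫ x, (w₀ x - lap (⇑w₀) x) * w₀ x
        = (∫ x, w₀ x * w₀ x) + (N : ℝ) * ∫ x, pd (⇑w₀) i x * pd (⇑w₀) i x := by
      have hsplit : (fun x => (w₀ x - lap (⇑w₀) x) * w₀ x)
          = fun x => w₀ x * w₀ x - lap (⇑w₀) x * w₀ x := by
        funext x; ring
      rw [hsplit, integral_sub (int_mul w₀ w₀) (int_lap_mul w₀ w₀), hlapw]
      ring
    -- ∫ x_i w ∂_i w = -J/2
    have hF1 := F1gen w₀ i
    -- w^p = w - lap w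
    have hphi : ∀ x, w₀ x ^ p = w₀ x - lap (⇑w₀) x := fun x => by have := hsol x; linarith
    -- ∫ x_i (w - lap w) ∂_i w = -P/(p+1)
    have hF2 : ∫ x, x i * ((w₀ x - lap (⇑w₀) x) * pd (⇑w₀) i x)
        = -(∫ x, (w₀ x - lap (⇑w₀) x) * w₀ x) / (p + 1) := by
      have hFd : ∀ x, HasFDerivAt (fun y => w₀ y ^ (p+1))
          (((p+1) * w₀ x ^ p) • fderiv ℝ (⇑w₀) x) x := by
        intro x
        have h := (w₀.differentiableAt (x := x)).hasFDerivAt.rpow_const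
          (p := p+1) (Or.inl (ne_of_gt (hpos x)))
        have he : p + 1 - 1 = p := by ring
        rw [he] at h; exact h
      have hrw : ∀ x : Fin N → ℝ, (w₀ x - lap (⇑w₀) x) * w₀ x = w₀ x ^ (p+1) := by
        intro x
        rw [← hphi x, Real.rpow_add_one (ne_of_gt (hpos x)) p]
      have hint1 : Integrable (fun x => w₀ x ^ (p+1)) :=
        (((int_mul w₀ w₀).sub (int_lap_mul w₀ w₀)).congr (Filter.Eventually.of_forall fun x => by
          simp only [Pi.sub_apply]; ring)).congr (Filter.Eventually.of_forall fun x => hrw x)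
      have hint2 : Integrable (fun x => x i * w₀ x ^ (p+1)) := by
        have base : Integrable (fun x => (w₀ x - lap (⇑w₀) x) * (Mk i w₀) x) :=
          ((int_mul w₀ (Mk i w₀)).sub (int_lap_mul w₀ (Mk i w₀))).congr
            (Filter.Eventually.of_forall fun x => by simp only [Pi.sub_apply]; ring)
        exact base.congr (Filter.Eventually.of_forall fun x => by
          simp only [Mk_apply]
          rw [show (w₀ x - lap (⇑w₀) x) * (w₀ x * x i) = ((w₀ x - lap (⇑w₀) x) * w₀ x) * x i
            from by ring, hrw x]; ring)
      have hint3 : Integrable (fun x =>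
          x i * ((((p+1) * w₀ x ^ p) • fderiv ℝ (⇑w₀) x) (Pi.single i 1))) := by
        have base : Integrable (fun x => (w₀ x - lap (⇑w₀) x) * (Mk i (Dk i w₀)) x) :=
          ((int_mul w₀ (Mk i (Dk i w₀))).sub (int_lap_mul w₀ (Mk i (Dk i w₀)))).congr
            (Filter.Eventually.of_forall fun x => by simp only [Pi.sub_apply]; ring)
        exact (base.const_mul (p+1)).congr (Filter.Eventually.of_forall fun x => by
          simp only [Mk_apply, Dk_apply, ContinuousLinearMap.coe_smul', Pi.smul_apply,
            smul_eq_mul, pd_def, hphi x]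
          ring)
      have key := intA i hFd hint1 hint2 hint3
      have el : (fun x => x i * ((((p+1) * w₀ x ^ p) • fderiv ℝ (⇑w₀) x) (Pi.single i 1)))
          = fun x => (p+1) * (x i * ((w₀ x - lap (⇑w₀) x) * pd (⇑w₀) i x)) := by
        funext x
        simp only [ContinuousLinearMap.coe_smul', Pi.smul_apply, smul_eq_mul, pd_def, hphi x]
        ring
      have er : (fun x : Fin N → ℝ => w₀ x ^ (p+1))
          = fun x => (w₀ x - lap (⇑w₀) x) * w₀ x := by
        funext x; rw [hrw x]
      rw [el, MeasureTheory.integral_const_mul, er] at key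
      rw [eq_div_iff (ne_of_gt hp1)]
      linear_combination key
    have hdiffDk : ∀ (k : Fin N) (x : Fin N → ℝ),
        HasFDerivAt (pd (⇑w₀) k) (fderiv ℝ (pd (⇑w₀) k) x) x := by
      intro k x
      have h := ((Dk k w₀).differentiableAt (x := x)).hasFDerivAt
      rwa [Dk_apply] at h
    have hF4 : ∀ k, ∫ x, pd (pd (⇑w₀) k) k x * (pd (⇑w₀) i x * x i)
        = (∫ x, pd (⇑w₀) k x * pd (⇑w₀) k x) / 2
          - (if k = i then ∫ x, pd (⇑w₀) k x * pd (⇑w₀) k x else 0) := by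
      intro k
      have hG : ∀ x, HasFDerivAt (fun y => y i * pd (⇑w₀) i y)
          (x i • fderiv ℝ (pd (⇑w₀) i) x + pd (⇑w₀) i x •
            (ContinuousLinearMap.proj i : (Fin N → ℝ) →L[ℝ] ℝ)) x := fun x =>
        HasFDerivAt.mul
          ((ContinuousLinearMap.proj i : (Fin N → ℝ) →L[ℝ] ℝ).hasFDerivAt) (hdiffDk i x)
      have intA2 : Integrable (fun x => x i * ((Dk k w₀) x * pd (⇑(Dk k w₀)) i x)) :=
        (int_mul (Dk k w₀) (Mk i (Dk i (Dk k w₀)))).congr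
          (Filter.Eventually.of_forall fun x => by
            simp only [Mk_apply, Dk_apply]; ring)
      have intB2 : Integrable (fun x =>
          ((Pi.single k 1 : Fin N → ℝ) i) * (pd (⇑w₀) i x * pd (⇑w₀) k x)) :=
        ((int_mul (Dk i w₀) (Dk k w₀)).const_mul ((Pi.single k 1 : Fin N → ℝ) i)).congr
          (Filter.Eventually.of_forall fun x => by simp only [Dk_apply])
      have i1 : Integrable (fun x =>
          ((x i • fderiv ℝ (pd (⇑w₀) i) x + pd (⇑w₀) i x •
            (ContinuousLinearMap.proj i : (Fin N → ℝ) →L[ℝ] ℝ)) (Pi.single k 1))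
            * (Dk k w₀) x) :=
        (intA2.add intB2).congr (Filter.Eventually.of_forall fun x => by
          simp only [Pi.add_apply, ContinuousLinearMap.add_apply, ContinuousLinearMap.coe_smul',
            Pi.smul_apply, smul_eq_mul, ContinuousLinearMap.proj_apply, Dk_apply, pd_def]
          rw [pd_comm w₀ i k x]
          ring)
      have i2 : Integrable (fun x =>
          (x i * pd (⇑w₀) i x) * fderiv ℝ (⇑(Dk k w₀)) x (Pi.single k 1)) :=
        (int_mul (Dk k (Dk k w₀)) (Mk i (Dk i w₀))).congr
          (Filter.Eventually.of_forall fun x => by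
            simp only [Mk_apply, Dk_apply, pd_def]; ring)
      have i3 : Integrable (fun x => (x i * pd (⇑w₀) i x) * (Dk k w₀) x) :=
        (int_mul (Dk k w₀) (Mk i (Dk i w₀))).congr
          (Filter.Eventually.of_forall fun x => by
            simp only [Mk_apply, Dk_apply]; ring)
      have key := integral_bilinear_hasFDerivAt_right_eq_neg_left_of_integrable (μ := volume)
        (B := ContinuousLinearMap.mul ℝ ℝ)
        (f := fun y => y i * pd (⇑w₀) i y)
        (f' := fun x => x i • fderiv ℝ (pd (⇑w₀) i) x + pd (⇑w₀) i x •
          (ContinuousLinearMap.proj i : (Fin N → ℝ) →L[ℝ] ℝ))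
        (g := ⇑(Dk k w₀)) (g' := fun x => fderiv ℝ (⇑(Dk k w₀)) x) (v := Pi.single k 1)
        i1 i2 i3 (fun x _ => hG x) (fun x _ => ((Dk k w₀).differentiableAt (x := x)).hasFDerivAt)
      have el : (fun x => (ContinuousLinearMap.mul ℝ ℝ) ((fun y => y i * pd (⇑w₀) i y) x)
            (fderiv ℝ (⇑(Dk k w₀)) x (Pi.single k 1)))
          = fun x => pd (pd (⇑w₀) k) k x * (pd (⇑w₀) i x * x i) := by
        funext x
        simp only [ContinuousLinearMap.mul_apply', Dk_apply, pd_def]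
        ring
      have er : (fun x => (ContinuousLinearMap.mul ℝ ℝ)
            ((x i • fderiv ℝ (pd (⇑w₀) i) x + pd (⇑w₀) i x •
              (ContinuousLinearMap.proj i : (Fin N → ℝ) →L[ℝ] ℝ)) (Pi.single k 1))
            ((Dk k w₀) x))
          = fun x => x i * ((Dk k w₀) x * pd (⇑(Dk k w₀)) i x)
            + ((Pi.single k 1 : Fin N → ℝ) i) * (pd (⇑w₀) i x * pd (⇑w₀) k x) := by
        funext x
        simp only [ContinuousLinearMap.mul_apply', ContinuousLinearMap.add_apply,
          ContinuousLinearMap.coe_smul', Pi.smul_apply, smul_eq_mul,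
          ContinuousLinearMap.proj_apply, Dk_apply, pd_def]
        rw [pd_comm w₀ i k x]
        ring
      rw [el, er, integral_add intA2 intB2, F1gen (Dk k w₀) i,
        MeasureTheory.integral_const_mul] at key
      simp only [Dk_apply] at key
      by_cases hki : k = i
      · subst hki
        rw [if_pos rfl]
        rw [Pi.single_eq_same, one_mul] at key
        linarith
      · have hz : (Pi.single k 1 : Fin N → ℝ) i = 0 := by
          rw [Pi.single_apply, if_neg (fun h => hki h.symm)]
        rw [hz] at key
        simp only [zero_mul] at key
        rw [if_neg hki]
        linarith
    -- Pohozaev identity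
    have hE2 : ((N:ℝ)/2) * (∫ x, pd (⇑w₀) i x * pd (⇑w₀) i x)
        - (∫ x, pd (⇑w₀) i x * pd (⇑w₀) i x)
        = -(∫ x, w₀ x * w₀ x)/2 + (∫ x, (w₀ x - lap (⇑w₀) x) * w₀ x)/(p+1) := by
      have hlapG := integral_lap_mul w₀ (Mk i (Dk i w₀))
      simp only [Mk_apply, Dk_apply] at hlapG
      rw [Finset.sum_congr rfl (fun k _ => hF4 k)] at hlapG
      have hterm : ∀ k : Fin N, ((∫ x, pd (⇑w₀) k x * pd (⇑w₀) k x) / 2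
          - (if k = i then ∫ x, pd (⇑w₀) k x * pd (⇑w₀) k x else 0))
          = (∫ x, pd (⇑w₀) i x * pd (⇑w₀) i x) / 2
            - (if k = i then ∫ x, pd (⇑w₀) i x * pd (⇑w₀) i x else 0) := by
        intro k
        by_cases h : k = i
        · subst h; rfl
        · rw [hIsym k]
      rw [Finset.sum_congr rfl (fun k _ => hterm k), Finset.sum_sub_distrib,
        Finset.sum_const, Finset.sum_ite_eq' Finset.univ i] at hlapG
      simp only [Finset.mem_univ, if_pos, Finset.card_univ, Fintype.card_fin,
        nsmul_eq_mul] at hlapG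
      -- other side
      have intW : Integrable (fun x => w₀ x * (pd (⇑w₀) i x * x i)) :=
        (int_mul w₀ (Mk i (Dk i w₀))).congr (Filter.Eventually.of_forall fun x => by
          simp only [Mk_apply, Dk_apply])
      have intLapG : Integrable (fun x => lap (⇑w₀) x * (pd (⇑w₀) i x * x i)) :=
        (int_lap_mul w₀ (Mk i (Dk i w₀))).congr (Filter.Eventually.of_forall fun x => by
          simp only [Mk_apply, Dk_apply])
      have e : (fun x => lap (⇑w₀) x * (pd (⇑w₀) i x * x i))
          = fun x => w₀ x * (pd (⇑w₀) i x * x i)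
            - (w₀ x - lap (⇑w₀) x) * (pd (⇑w₀) i x * x i) := by
        funext x; ring
      have e2 : (fun x => w₀ x * (pd (⇑w₀) i x * x i))
          = fun x => x i * (w₀ x * pd (⇑w₀) i x) := by
        funext x; ring
      have e3 : (fun x => (w₀ x - lap (⇑w₀) x) * (pd (⇑w₀) i x * x i))
          = fun x => x i * ((w₀ x - lap (⇑w₀) x) * pd (⇑w₀) i x) := by
        funext x; ring
      have intWL : Integrable (fun x => (w₀ x - lap (⇑w₀) x) * (pd (⇑w₀) i x * x i)) :=
        (intW.sub intLapG).congr (Filter.Eventually.of_forall fun x => by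
          simp only [Pi.sub_apply]; ring)
      rw [e, integral_sub intW intWL, e2, e3, hF1, hF2] at hlapG
      have hnd : (-∫ x, (w₀ x - lap (⇑w₀) x) * w₀ x)/(p+1)
          = -((∫ x, (w₀ x - lap (⇑w₀) x) * w₀ x)/(p+1)) := neg_div _ _
      have hnh : (N:ℝ) * ((∫ x, pd (⇑w₀) i x * pd (⇑w₀) i x)/2)
          = (N:ℝ)/2 * (∫ x, pd (⇑w₀) i x * pd (⇑w₀) i x) := by ring
      linarith [hlapG, hnd, hnh]
    -- final algebra
    have hkey : σ * (∫ x, pd (⇑w₀) i x * pd (⇑w₀) i x) = (∫ x, w₀ x * w₀ x) / 2 := by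
      have hPv : ∫ x, (w₀ x - lap (⇑w₀) x) * w₀ x
          = (((N:ℝ)/2) * (∫ x, pd (⇑w₀) i x * pd (⇑w₀) i x)
            - (∫ x, pd (⇑w₀) i x * pd (⇑w₀) i x) + (∫ x, w₀ x * w₀ x)/2) * (p+1) := by
        rw [← div_eq_iff (ne_of_gt hp1)]
        have hnj : (-∫ x, w₀ x * w₀ x)/2 = -((∫ x, w₀ x * w₀ x)/2) := neg_div _ _
        linarith [hE2, hnj]
      have hcomb : (∫ x, w₀ x * w₀ x) + (N:ℝ) * (∫ x, pd (⇑w₀) i x * pd (⇑w₀) i x)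
          = (((N:ℝ)/2) * (∫ x, pd (⇑w₀) i x * pd (⇑w₀) i x)
            - (∫ x, pd (⇑w₀) i x * pd (⇑w₀) i x) + (∫ x, w₀ x * w₀ x)/2) * (p+1) := by
        rw [← hPv, hE1]
      have hσm : σ * (p-1) = (p+1) - (N:ℝ)/2 * (p-1) := by
        rw [hσdef]; field_simp
      have h2 : ((p+1) - (N:ℝ)/2*(p-1)) * (∫ x, pd (⇑w₀) i x * pd (⇑w₀) i x)
          = (∫ x, w₀ x * w₀ x)/2 * (p-1) := by
        linear_combination hcomb
      refine mul_right_cancel₀ hpm ?_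
      calc σ * (∫ x, pd (⇑w₀) i x * pd (⇑w₀) i x) * (p-1)
          = (σ*(p-1)) * (∫ x, pd (⇑w₀) i x * pd (⇑w₀) i x) := by ring
        _ = ((p+1) - (N:ℝ)/2*(p-1)) * (∫ x, pd (⇑w₀) i x * pd (⇑w₀) i x) := by rw [hσm]
        _ = (∫ x, w₀ x * w₀ x)/2 * (p-1) := h2
    -- conclude
    have intII : Integrable (fun x => pd (⇑w₀) i x * pd (⇑w₀) i x) :=
      (int_mul (Dk i w₀) (Dk i w₀)).congr (Filter.Eventually.of_forall fun x => by
        simp only [Dk_apply])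
    have intXW : Integrable (fun x => σ⁻¹ * (x i * (w₀ x * pd (⇑w₀) i x))) :=
      ((int_mul w₀ (Mk i (Dk i w₀))).congr (Filter.Eventually.of_forall fun x => by
        simp only [Mk_apply, Dk_apply]; ring)).const_mul σ⁻¹
    have hsplitg : (fun x => (pd (⇑w₀) i x + σ⁻¹ * x i * w₀ x) * pd (⇑w₀) i x)
        = fun x => pd (⇑w₀) i x * pd (⇑w₀) i x + σ⁻¹ * (x i * (w₀ x * pd (⇑w₀) i x)) := by
      funext x; ring
    rw [hsplitg, integral_add intII intXW, MeasureTheory.integral_const_mul, hF1]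
    have : (∫ x, pd (⇑w₀) i x * pd (⇑w₀) i x) = σ⁻¹ * ((∫ x, w₀ x * w₀ x) / 2) := by
      rw [← hkey]; field_simp
    rw [this]
    field_simp
    ring
  · refine integral_odd_zero (reflL_invol i) (reflL_mp i) _ (fun x => ?_)
    rw [pd_reflL w₀ i (hwrefl i) i x, pd_reflL w₀ i (hwrefl i) j x, hwrefl i x,
      reflL_apply i x j, if_neg (fun h => hij h.symm), if_neg (fun h => hij h.symm), if_pos rfl]
    ring
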